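/- Define an abstract Lie algebra over ℝ with basis {τ_{m,j} : m,j ≥ 0} and bracket [τ_{m,j}, τ_{m',j'}] = ((2j'+1)m − (2j+1)m') τ_{m+m'−1, j+j'} (interpreted as 0 when m + m' = 0 since then the coefficient vanishes). Then this bracket satisfies the Jacobi identity, so it indeed defines a Lie algebra. -/

import Mathlib

/-- The basis element τ_{m,j} of the free ℝ-vector space on symbols τ_{m,j}, m, j ∈ ℕ. -/
noncomputable def tau (m j : ℕ) : (ℕ × ℕ) →₀ ℝ := Finsupp.single (m, j) 1

/-- The bilinear bracket determined by the structure constants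
[τ_{m,j}, τ_{m',j'}] = ((2j'+1)m − (2j+1)m') τ_{m+m'−1, j+j'}
(the coefficient vanishes when m = m' = 0, so no τ_{−1,·} is needed;
the natural subtraction m+m'−1 is harmless there). -/
noncomputable def br (f g : (ℕ × ℕ) →₀ ℝ) : (ℕ × ℕ) →₀ ℝ :=
  f.sum fun p a => g.sum fun q b =>
    (a * b * ((2 * (q.2 : ℝ) + 1) * (p.1 : ℝ) - (2 * (p.2 : ℝ) + 1) * (q.1 : ℝ))) •
      Finsupp.single (p.1 + q.1 - 1, p.2 + q.2) (1 : ℝ)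

/-- the bracket is antisymmetric and satisfies the Jacobi identity,
so it defines a Lie algebra structure on the free vector space on the τ_{m,j}. -/
noncomputable def C (p q : ℕ × ℕ) : ℝ :=
  (2 * (q.2 : ℝ) + 1) * (p.1 : ℝ) - (2 * (p.2 : ℝ) + 1) * (q.1 : ℝ)

def I (p q : ℕ × ℕ) : ℕ × ℕ := (p.1 + q.1 - 1, p.2 + q.2)

lemma br_single_single (p q : ℕ × ℕ) (a b : ℝ) :
    br (Finsupp.single p a) (Finsupp.single q b) =
      Finsupp.single (I p q) (a * b * C p q) := by
  unfold br C I
  rw [Finsupp.sum_single_index, Finsupp.sum_single_index]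
  · rw [Finsupp.smul_single, smul_eq_mul, mul_one]
  · simp
  · simp [Finsupp.sum_zero_index]

lemma br_zero_left (g : (ℕ × ℕ) →₀ ℝ) : br 0 g = 0 := by
  simp [br]

lemma br_zero_right (f : (ℕ × ℕ) →₀ ℝ) : br f 0 = 0 := by
  simp [br]

lemma br_add_left (f f' g : (ℕ × ℕ) →₀ ℝ) : br (f + f') g = br f g + br f' g := by
  unfold br
  rw [Finsupp.sum_add_index]
  · intro p _; simp
  · intro p _ a a'
    rw [← Finsupp.sum_add]
    congr 1; ext q b
    rw [← add_smul]; ring_nf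

lemma br_add_right (f g g' : (ℕ × ℕ) →₀ ℝ) : br f (g + g') = br f g + br f g' := by
  unfold br
  rw [← Finsupp.sum_add]
  congr 1; ext p a
  rw [Finsupp.sum_add_index]
  · intro q _; simp
  · intro q _ b b'
    rw [← add_smul]; ring_nf

lemma tri (x y z : ℕ × ℕ) (u v w : ℝ) (hxy : x = y) (hxz : x = z) (h : u + v + w = 0) :
    Finsupp.single x u + Finsupp.single y v + Finsupp.single z w = 0 := by
  subst hxy hxz
  rw [← Finsupp.single_add, ← Finsupp.single_add, h, Finsupp.single_zero]

lemma tri2 (y z : ℕ × ℕ) (v w : ℝ) (hyz : y = z) (h : v + w = 0) :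
    Finsupp.single y v + Finsupp.single z w = 0 := by
  subst hyz
  rw [← Finsupp.single_add, h, Finsupp.single_zero]

lemma jacobi_single (p q r : ℕ × ℕ) (a b c : ℝ) :
    br (Finsupp.single p a) (br (Finsupp.single q b) (Finsupp.single r c)) +
      br (Finsupp.single q b) (br (Finsupp.single r c) (Finsupp.single p a)) +
      br (Finsupp.single r c) (br (Finsupp.single p a) (Finsupp.single q b)) = 0 := by
  obtain ⟨m1, j1⟩ := p
  obtain ⟨m2, j2⟩ := q
  obtain ⟨m3, j3⟩ := r
  simp only [br_single_single, I, C]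
  rcases m1 with _ | m1 <;> rcases m2 with _ | m2 <;> rcases m3 with _ | m3 <;>
    simp only [Nat.add_succ, Nat.succ_add, Nat.succ_sub_one, Nat.add_zero, Nat.zero_add,
      Nat.zero_sub, Nat.cast_zero, mul_zero, zero_mul, sub_zero, zero_sub, sub_self,
      Finsupp.single_zero, zero_add, add_zero] <;>
    first
      | (apply tri <;> first | (simp only [Prod.mk.injEq]; omega) | (push_cast; ring))
      | (apply tri2 <;> first | (simp only [Prod.mk.injEq]; omega) | (push_cast; ring))

lemma antisym_single (p q : ℕ × ℕ) (a b : ℝ) :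
    br (Finsupp.single p a) (Finsupp.single q b) =
      -br (Finsupp.single q b) (Finsupp.single p a) := by
  rw [br_single_single, br_single_single, ← Finsupp.single_neg]
  have h : I p q = I q p := by simp [I, Prod.ext_iff]; omega
  rw [h]
  congr 1
  simp only [C]; ring

lemma antisym_single_left (p : ℕ × ℕ) (a : ℝ) (g : (ℕ × ℕ) →₀ ℝ) :
    br (Finsupp.single p a) g = -br g (Finsupp.single p a) := by
  induction g using Finsupp.induction with
  | zero => simp [br_zero_left, br_zero_right]
  | single_add q b g _ _ ih =>
    rw [br_add_right, br_add_left, ih, antisym_single]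
    abel

lemma br_antisym (f g : (ℕ × ℕ) →₀ ℝ) : br f g = -br g f := by
  induction f using Finsupp.induction with
  | zero => simp [br_zero_left, br_zero_right]
  | single_add p a f _ _ ih =>
    rw [br_add_left, br_add_right, ih, antisym_single_left]
    abel

lemma add_shuffle {M : Type*} [AddCommGroup M] (A1 A2 B1 B2 C1 C2 : M)
    (h1 : A1 + B1 + C1 = 0) (h2 : A2 + B2 + C2 = 0) :
    (A1 + A2) + (B1 + B2) + (C1 + C2) = 0 := by
  calc (A1 + A2) + (B1 + B2) + (C1 + C2) = (A1 + B1 + C1) + (A2 + B2 + C2) := by abel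
    _ = 0 := by rw [h1, h2, add_zero]

lemma jacobi_ssg (p q : ℕ × ℕ) (a b : ℝ) (h : (ℕ × ℕ) →₀ ℝ) :
    br (Finsupp.single p a) (br (Finsupp.single q b) h) +
      br (Finsupp.single q b) (br h (Finsupp.single p a)) +
      br h (br (Finsupp.single p a) (Finsupp.single q b)) = 0 := by
  induction h using Finsupp.induction with
  | zero => simp [br_zero_left, br_zero_right]
  | single_add r c h _ _ ih =>
    rw [br_add_right, br_add_right, br_add_left, br_add_right, br_add_left]
    exact add_shuffle _ _ _ _ _ _ (jacobi_single p q r a b c) ih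

lemma jacobi_sgg (p : ℕ × ℕ) (a : ℝ) (g h : (ℕ × ℕ) →₀ ℝ) :
    br (Finsupp.single p a) (br g h) +
      br g (br h (Finsupp.single p a)) +
      br h (br (Finsupp.single p a) g) = 0 := by
  induction g using Finsupp.induction with
  | zero => simp [br_zero_left, br_zero_right]
  | single_add q b g _ _ ih =>
    rw [br_add_left, br_add_right, br_add_left, br_add_right, br_add_right]
    exact add_shuffle _ _ _ _ _ _ (jacobi_ssg p q a b h) ih

lemma br_jacobi (f g h : (ℕ × ℕ) →₀ ℝ) :
    br f (br g h) + br g (br h f) + br h (br f g) = 0 := by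
  induction f using Finsupp.induction with
  | zero => simp [br_zero_left, br_zero_right]
  | single_add p a f _ _ ih =>
    rw [br_add_left, br_add_right, br_add_left, br_add_right, br_add_right]
    exact add_shuffle _ _ _ _ _ _ (jacobi_sgg p a g h) ih

theorem br_lie_algebra :
    (∀ f g : (ℕ × ℕ) →₀ ℝ, br f g = -br g f) ∧
    (∀ f g h : (ℕ × ℕ) →₀ ℝ, br f (br g h) + br g (br h f) + br h (br f g) = 0) := by
  exact ⟨br_antisym, br_jacobi⟩
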